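/- For all a, b ∈ SH(n), the matrix α(a,b) := (a·b)·((b·a²·b)^{1/2})⁻¹ is unitary of determinant 1 (i.e. α(a,b) ∈ SU(n)), and the matrix product satisfies a·b = α(a,b)·m(a,b). (This exhibits (SL(n,ℂ), SU(n), SH(n)) as a quasi-double Lie group.) -/

import Mathlib

open Matrix ComplexOrder

/-- The set of `n × n` positive-definite Hermitian complex matrices of
determinant `1` (`Matrix.PosDef` includes Hermitian-ness). -/
def SH (n : ℕ) : Set (Matrix (Fin n) (Fin n) ℂ) :=
  {a | a.PosDef ∧ a.det = 1}

/-- The unique positive-semidefinite square root of a positive-semidefinite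
matrix (junk value `0` otherwise). -/
noncomputable def msqrt {n : ℕ} (p : Matrix (Fin n) (Fin n) ℂ) :
    Matrix (Fin n) (Fin n) ℂ :=
  letI := Classical.dec p.PosSemidef
  if h : p.PosSemidef then
    (h.1.eigenvectorUnitary : Matrix (Fin n) (Fin n) ℂ) *
      diagonal ((↑) ∘ Real.sqrt ∘ h.1.eigenvalues) *
      (star h.1.eigenvectorUnitary : Matrix (Fin n) (Fin n) ℂ)
  else 0

lemma msqrt_eq {n : ℕ} {p : Matrix (Fin n) (Fin n) ℂ} (hp : p.PosSemidef) :
    msqrt p = (hp.1.eigenvectorUnitary : Matrix (Fin n) (Fin n) ℂ) *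
      diagonal ((↑) ∘ Real.sqrt ∘ hp.1.eigenvalues) *
      (star hp.1.eigenvectorUnitary : Matrix (Fin n) (Fin n) ℂ) := by
  rw [msqrt, dif_pos hp]

lemma msqrt_mul_self {n : ℕ} {p : Matrix (Fin n) (Fin n) ℂ} (hp : p.PosSemidef) :
    msqrt p * msqrt p = p := by
  rw [msqrt_eq hp]
  have hU : (star hp.1.eigenvectorUnitary : Matrix (Fin n) (Fin n) ℂ) *
      (hp.1.eigenvectorUnitary : Matrix (Fin n) (Fin n) ℂ) = 1 :=
    Unitary.coe_star_mul_self _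
  have hD : diagonal (((↑) : ℝ → ℂ) ∘ Real.sqrt ∘ hp.1.eigenvalues) *
      diagonal ((↑) ∘ Real.sqrt ∘ hp.1.eigenvalues) =
      diagonal (((↑) : ℝ → ℂ) ∘ hp.1.eigenvalues) := by
    rw [diagonal_mul_diagonal]
    congr 1
    funext i
    simp only [Function.comp_apply]
    rw [← Complex.ofReal_mul, Real.mul_self_sqrt (hp.eigenvalues_nonneg i)]
  conv_rhs => rw [hp.1.spectral_theorem, Unitary.conjStarAlgAut_apply]
  calc _ = (hp.1.eigenvectorUnitary : Matrix (Fin n) (Fin n) ℂ) *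
        (diagonal (((↑) : ℝ → ℂ) ∘ Real.sqrt ∘ hp.1.eigenvalues) *
        ((star hp.1.eigenvectorUnitary : Matrix (Fin n) (Fin n) ℂ) *
        (hp.1.eigenvectorUnitary : Matrix (Fin n) (Fin n) ℂ)) *
        diagonal ((↑) ∘ Real.sqrt ∘ hp.1.eigenvalues)) *
        (star hp.1.eigenvectorUnitary : Matrix (Fin n) (Fin n) ℂ) := by
          simp only [mul_assoc]
    _ = _ := by rw [hU, mul_one, hD]; rfl

lemma msqrt_isHermitian {n : ℕ} {p : Matrix (Fin n) (Fin n) ℂ} (hp : p.PosSemidef) :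
    (msqrt p)ᴴ = msqrt p := by
  rw [msqrt_eq hp, conjTranspose_mul, conjTranspose_mul, diagonal_conjTranspose,
    ← star_eq_conjTranspose, ← star_eq_conjTranspose, star_star, mul_assoc]
  congr 3
  funext i
  simp

lemma msqrt_det_nonneg {n : ℕ} {p : Matrix (Fin n) (Fin n) ℂ} (hp : p.PosSemidef) :
    0 ≤ (msqrt p).det := by
  have hU : (hp.1.eigenvectorUnitary : Matrix (Fin n) (Fin n) ℂ) *
      (star hp.1.eigenvectorUnitary : Matrix (Fin n) (Fin n) ℂ) = 1 :=
    Unitary.coe_mul_star_self _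
  rw [msqrt_eq hp, det_mul, det_mul, mul_comm (det _) (det (diagonal _)), mul_assoc,
    ← det_mul, mul_comm (det _) (det _), ← det_mul, hU, one_mul, det_diagonal]
  refine Finset.prod_nonneg fun i _ => ?_
  simp only [Function.comp_apply]
  exact Complex.zero_le_real.mpr (Real.sqrt_nonneg _)

/-- The loop multiplication `m(a,b) := (b·a²·b)^{1/2}` on `SH n`. -/
noncomputable def mSH {n : ℕ} (a b : Matrix (Fin n) (Fin n) ℂ) :
    Matrix (Fin n) (Fin n) ℂ :=
  msqrt (b * a ^ 2 * b)

/-- Conjugation of a positive-definite matrix by an invertible Hermitian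
matrix is positive definite. -/
lemma posDef_conj {n : ℕ} {M B : Matrix (Fin n) (Fin n) ℂ}
    (hM : M.PosDef) (hB : B.PosDef) : (B * M * B).PosDef := by
  have hBH : Bᴴ = B := hB.isHermitian
  refine Matrix.PosDef.of_dotProduct_mulVec_pos ?_ fun x hx => ?_
  · show (B * M * B)ᴴ = B * M * B
    rw [conjTranspose_mul, conjTranspose_mul, hBH, hM.isHermitian.eq, mul_assoc]
  · have hBu : IsUnit B.det := hB.det_pos.ne'.isUnit
    have hBx : B *ᵥ x ≠ 0 := by
      intro h
      apply hx
      have h2 := congrArg (fun y => B⁻¹ *ᵥ y) h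
      simpa [mulVec_mulVec, Matrix.nonsing_inv_mul B hBu] using h2
    have key := hM.dotProduct_mulVec_pos hBx
    have heq : star x ⬝ᵥ ((B * M * B) *ᵥ x) = star (B *ᵥ x) ⬝ᵥ (M *ᵥ (B *ᵥ x)) := by
      simp only [star_mulVec, hBH, ← mulVec_mulVec, dotProduct_mulVec]
    rw [heq]
    exact key

/-- For all `a b ∈ SH n`, the matrix
`α(a,b) := (a·b)·((b·a²·b)^{1/2})⁻¹` is unitary of determinant `1`, and
`a·b = α(a,b)·m(a,b)`. (This exhibits `(SL(n,ℂ), SU(n), SH(n))` as a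
quasi-double Lie group.) -/
theorem stmt_15 (n : ℕ) (a b : Matrix (Fin n) (Fin n) ℂ)
    (ha : a ∈ SH n) (hb : b ∈ SH n) :
    (a * b) * (mSH a b)⁻¹ ∈ Matrix.unitaryGroup (Fin n) ℂ ∧
    ((a * b) * (mSH a b)⁻¹).det = 1 ∧
    a * b = ((a * b) * (mSH a b)⁻¹) * mSH a b := by
  obtain ⟨haP, haD⟩ := ha
  obtain ⟨hbP, hbD⟩ := hb
  have ha2 : (a ^ 2).PosDef := by
    rw [pow_two]
    have := posDef_conj haP haP  -- a * a * a? no; need a*a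
    -- a * a = a * 1 * a
    have h1 : a * a = a * 1 * a := by rw [mul_one]
    rw [h1]
    exact posDef_conj Matrix.PosDef.one haP
  have hpP : (b * a ^ 2 * b).PosDef := posDef_conj ha2 hbP
  have hp : (b * a ^ 2 * b).PosSemidef := hpP.posSemidef
  -- identify mSH with hp.sqrt
  have hm : mSH a b = msqrt (b * a ^ 2 * b) := rfl
  set s := mSH a b with hs
  have hsq : s * s = b * a ^ 2 * b := by rw [hm, msqrt_mul_self hp]
  have hsH : sᴴ = s := by rw [hm]; exact msqrt_isHermitian hp
  -- determinant of p
  have hdetp : (b * a ^ 2 * b).det = 1 := by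
    rw [det_mul, det_mul, det_pow, haD, hbD]; ring
  -- det s is nonneg
  have hdet_nonneg : 0 ≤ s.det := by
    rw [hm]; exact msqrt_det_nonneg hp
  have hdet_sq : s.det * s.det = 1 := by
    rw [← det_mul, hsq, hdetp]
  have hdet : s.det = 1 := by
    have h2 : s.det ^ 2 = 1 := by rw [pow_two]; exact hdet_sq
    rcases mul_self_eq_one_iff.mp hdet_sq with h | h
    · exact h
    · exfalso
      rw [h, Complex.le_def] at hdet_nonneg
      norm_num at hdet_nonneg
  have hunit : IsUnit s.det := by rw [hdet]; exact isUnit_one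
  have hinv_mul : s⁻¹ * s = 1 := Matrix.nonsing_inv_mul s hunit
  have hmul_inv : s * s⁻¹ = 1 := Matrix.mul_nonsing_inv s hunit
  have hstar : star ((a * b) * s⁻¹) = s⁻¹ * (b * a) := by
    show ((a * b) * s⁻¹)ᴴ = s⁻¹ * (b * a)
    rw [conjTranspose_mul, conjTranspose_mul, conjTranspose_nonsing_inv, hsH,
      haP.isHermitian.eq, hbP.isHermitian.eq]
  have hmem : (a * b) * s⁻¹ ∈ Matrix.unitaryGroup (Fin n) ℂ := by
    rw [Matrix.mem_unitaryGroup_iff']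
    rw [hstar]
    have : s⁻¹ * (b * a) * ((a * b) * s⁻¹) = s⁻¹ * (b * a ^ 2 * b) * s⁻¹ := by
      rw [pow_two]
      simp only [mul_assoc]
    rw [this, ← hsq]
    calc s⁻¹ * (s * s) * s⁻¹ = (s⁻¹ * s) * (s * s⁻¹) := by simp only [mul_assoc]
      _ = 1 := by rw [hinv_mul, hmul_inv, one_mul]
  refine ⟨hmem, ?_, ?_⟩
  · rw [det_mul, det_mul, det_nonsing_inv, hdet, haD, hbD]
    norm_num
  · rw [mul_assoc, hinv_mul, mul_one]
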